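/- Under the hypotheses of the bijectivity-modulus inexact Newton theorem (λ(Df(x₀)) ≥ ν, Lipschitz constant K for Df, g_d having smallest root t* with Kt* ≤ ν(1 − 1/√3)), for each term x_k of the inexact Newton sequence and any y ∈ U, ‖y − (x_k − Df(x_k)⁻¹f(x_k))‖ ≤ (√3/ν)·‖Df(x_k)(x_k − y) − f(x_k)‖. -/

import Mathlib

section Aux

variable {X Y : Type*} [NormedAddCommGroup X] [NormedSpace ℝ X]
    [NormedAddCommGroup Y] [NormedSpace ℝ Y]

lemma my_symm_unique (e e' : X ≃L[ℝ] Y) (h : (e : X →L[ℝ] Y) = (e' : X →L[ℝ] Y)) (y : Y) :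
    e.symm y = e'.symm y := by
  apply e.injective
  rw [e.apply_symm_apply]
  have h2 : (e : X →L[ℝ] Y) (e'.symm y) = (e' : X →L[ℝ] Y) (e'.symm y) := by rw [h]
  simp only [ContinuousLinearEquiv.coe_coe] at h2
  rw [h2, e'.apply_symm_apply]

lemma my_symm_norm_le (e : X ≃L[ℝ] Y) {c : ℝ} (hc : 0 < c)
    (hlow : ∀ z, c * ‖z‖ ≤ ‖(e : X →L[ℝ] Y) z‖) :
    ‖(e.symm : Y →L[ℝ] X)‖ ≤ c⁻¹ := by
  apply ContinuousLinearMap.opNorm_le_bound _ (inv_nonneg.2 hc.le)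
  intro y
  have h := hlow (e.symm y)
  simp only [ContinuousLinearEquiv.coe_coe, e.apply_symm_apply] at h
  have h2 := mul_le_mul_of_nonneg_left h (inv_nonneg.2 hc.le)
  rw [← mul_assoc, inv_mul_cancel₀ hc.ne', one_mul] at h2
  simpa using h2

lemma my_low_of_symm (e : X ≃L[ℝ] Y) {c : ℝ} (hc : 0 < c)
    (h : ‖(e.symm : Y →L[ℝ] X)‖ ≤ c⁻¹) (z : X) :
    c * ‖z‖ ≤ ‖(e : X →L[ℝ] Y) z‖ := by
  have h1 := (e.symm : Y →L[ℝ] X).le_opNorm ((e : X →L[ℝ] Y) z)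
  simp only [ContinuousLinearEquiv.coe_coe, e.symm_apply_apply] at h1
  have h2 : ‖z‖ ≤ c⁻¹ * ‖((e : X →L[ℝ] Y)) z‖ :=
    h1.trans (mul_le_mul_of_nonneg_right h (norm_nonneg _))
  have h3 := mul_le_mul_of_nonneg_left h2 hc.le
  rwa [← mul_assoc, mul_inv_cancel₀ hc.ne', one_mul] at h3

lemma my_exists_equiv [CompleteSpace X] (e₀ : X ≃L[ℝ] Y) {B : X →L[ℝ] Y} {ν c : ℝ}
    (hν : 0 < ν) (hsymm : ‖(e₀.symm : Y →L[ℝ] X)‖ ≤ ν⁻¹)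
    (hc : ‖B - (e₀ : X →L[ℝ] Y)‖ ≤ c) (hcν : c < ν) :
    ∃ e : X ≃L[ℝ] Y, (e : X →L[ℝ] Y) = B := by
  set u : X →L[ℝ] X := (e₀.symm : Y →L[ℝ] X).comp B with hu
  have h0 : (0:ℝ) ≤ c := le_trans (norm_nonneg _) hc
  have h1 : ‖(1 : X →L[ℝ] X) - u‖ < 1 := by
    have heq : (1 : X →L[ℝ] X) - u = (e₀.symm : Y →L[ℝ] X).comp ((e₀ : X →L[ℝ] Y) - B) := by
      ext z; simp [hu]
    rw [heq]
    calc ‖(e₀.symm : Y →L[ℝ] X).comp ((e₀ : X →L[ℝ] Y) - B)‖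
        ≤ ‖(e₀.symm : Y →L[ℝ] X)‖ * ‖(e₀ : X →L[ℝ] Y) - B‖ := ContinuousLinearMap.opNorm_comp_le _ _
      _ ≤ ν⁻¹ * c := by
          rw [norm_sub_rev]
          exact mul_le_mul hsymm hc (norm_nonneg _) (inv_nonneg.2 hν.le)
      _ < 1 := by rw [inv_mul_lt_iff₀ hν]; simpa using hcν
  let w : (X →L[ℝ] X)ˣ := Units.oneSub ((1 : X →L[ℝ] X) - u) h1
  have hw : (w : X →L[ℝ] X) = u := by
    show (1 : X →L[ℝ] X) - ((1 : X →L[ℝ] X) - u) = u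
    abel
  refine ⟨(ContinuousLinearEquiv.ofUnit w).trans e₀, ?_⟩
  ext z
  have hz : (ContinuousLinearEquiv.ofUnit w) z = u z := by
    show (w : X →L[ℝ] X) z = u z
    rw [hw]
  simp [ContinuousLinearEquiv.trans_apply, hz, hu]

open intervalIntegral in
lemma my_taylor {X Y : Type*} [NormedAddCommGroup X] [NormedSpace ℝ X]
    [NormedAddCommGroup Y] [NormedSpace ℝ Y] [CompleteSpace Y]
    {U : Set X} {f : X → Y} {f' : X → X →L[ℝ] Y}
    (hf : ∀ x ∈ U, HasFDerivAt f (f' x) x)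
    {s : Set X} (hs : Convex ℝ s) (hsU : s ⊆ U)
    {K : ℝ} (hK : 0 ≤ K)
    (hLip : ∀ x ∈ s, ∀ y ∈ s, ‖f' x - f' y‖ ≤ K * ‖x - y‖)
    {a b : X} (ha : a ∈ s) (hb : b ∈ s) :
    ‖f b - f a - f' a (b - a)‖ ≤ K / 2 * ‖b - a‖ ^ 2 := by
  set Δ := b - a with hΔ
  have hseg : ∀ u : ℝ, u ∈ Set.Icc (0:ℝ) 1 → a + u • Δ ∈ s := by
    intro u hu
    simpa [hΔ] using hs.add_smul_sub_mem ha hb hu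
  have huIcc : Set.uIcc (0:ℝ) 1 = Set.Icc 0 1 := Set.uIcc_of_le zero_le_one
  set g : ℝ → Y := fun u => f (a + u • Δ) - u • (f' a Δ) with hg
  set F : ℝ → Y := fun u => f' (a + u • Δ) Δ - f' a Δ with hF
  have hderiv : ∀ u ∈ Set.uIcc (0:ℝ) 1, HasDerivAt g (F u) u := by
    intro u hu
    rw [huIcc] at hu
    have h1 : HasDerivAt (fun u : ℝ => a + u • Δ) Δ u := by
      simpa using ((hasDerivAt_id u).smul_const Δ).const_add a
    have h2 : HasDerivAt (fun u : ℝ => f (a + u • Δ)) (f' (a + u • Δ) Δ) u :=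
      (hf _ (hsU (hseg u hu))).comp_hasDerivAt u h1
    have h3 : HasDerivAt (fun u : ℝ => u • (f' a Δ)) (f' a Δ) u := by
      simpa using (hasDerivAt_id u).smul_const (f' a Δ)
    exact h2.sub h3
  have hlipF : LipschitzOnWith (K * ‖Δ‖ ^ 2).toNNReal F (Set.uIcc (0:ℝ) 1) := by
    rw [huIcc]
    apply LipschitzOnWith.of_dist_le_mul
    intro u hu v hv
    rw [dist_eq_norm, dist_eq_norm]
    have h1 : F u - F v = (f' (a + u • Δ) - f' (a + v • Δ)) Δ := by
      simp [hF, ContinuousLinearMap.sub_apply]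
    rw [h1]
    calc ‖(f' (a + u • Δ) - f' (a + v • Δ)) Δ‖
        ≤ ‖f' (a + u • Δ) - f' (a + v • Δ)‖ * ‖Δ‖ := ContinuousLinearMap.le_opNorm _ _
      _ ≤ (K * ‖(a + u • Δ) - (a + v • Δ)‖) * ‖Δ‖ := by
          exact mul_le_mul_of_nonneg_right
            (hLip _ (hseg u hu) _ (hseg v hv)) (norm_nonneg _)
      _ = (K * ‖Δ‖ ^ 2) * ‖u - v‖ := by
          have : (a + u • Δ) - (a + v • Δ) = (u - v) • Δ := by
            rw [sub_smul]; abel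
          rw [this, norm_smul]
          simp [Real.norm_eq_abs]
          ring
      _ = ↑(K * ‖Δ‖ ^ 2).toNNReal * ‖u - v‖ := by
          rw [Real.coe_toNNReal _ (by positivity)]
  have hInt : IntervalIntegrable F MeasureTheory.volume 0 1 :=
    hlipF.continuousOn.intervalIntegrable
  have heq : ∫ u in (0:ℝ)..1, F u = g 1 - g 0 :=
    integral_eq_sub_of_hasDerivAt hderiv hInt
  have hg10 : g 1 - g 0 = f b - f a - f' a (b - a) := by
    simp [hg, hΔ]
    abel
  have hbound : ‖∫ u in (0:ℝ)..1, F u‖ ≤ |∫ u in (0:ℝ)..1, K * ‖Δ‖ ^ 2 * u| := by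
    apply intervalIntegral.norm_integral_le_abs_of_norm_le
    · rw [MeasureTheory.ae_restrict_iff' measurableSet_uIoc]
      apply Filter.Eventually.of_forall
      intro u hu
      rw [Set.uIoc_of_le zero_le_one] at hu
      have hu' : u ∈ Set.Icc (0:ℝ) 1 := ⟨hu.1.le, hu.2⟩
      calc ‖F u‖ = ‖(f' (a + u • Δ) - f' a) Δ‖ := by
            simp [hF, ContinuousLinearMap.sub_apply]
        _ ≤ ‖f' (a + u • Δ) - f' a‖ * ‖Δ‖ := ContinuousLinearMap.le_opNorm _ _
        _ ≤ (K * ‖(a + u • Δ) - a‖) * ‖Δ‖ :=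
            mul_le_mul_of_nonneg_right
              (hLip _ (hseg u hu') _ ha) (norm_nonneg _)
        _ = K * ‖Δ‖ ^ 2 * u := by
            have : (a + u • Δ) - a = u • Δ := by abel
            rw [this, norm_smul]
            simp [Real.norm_eq_abs, abs_of_nonneg hu.1.le]
            ring
    · apply Continuous.intervalIntegrable
      continuity
  have hval : ∫ u in (0:ℝ)..1, K * ‖Δ‖ ^ 2 * u = K * ‖Δ‖ ^ 2 * (1 / 2) := by
    rw [intervalIntegral.integral_const_mul, integral_id]
    norm_num
  rw [← hg10, ← heq]
  calc ‖∫ u in (0:ℝ)..1, F u‖ ≤ |∫ u in (0:ℝ)..1, K * ‖Δ‖ ^ 2 * u| := hbound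
    _ = K * ‖Δ‖ ^ 2 * (1 / 2) := by
        rw [hval, abs_of_nonneg (by positivity)]
    _ = K / 2 * ‖Δ‖ ^ 2 := by ring

end Aux

open scoped Classical in
/-- The bijectivity modulus of a bounded linear operator: `‖F⁻¹‖⁻¹` if `F` is
invertible with bounded inverse, and `0` otherwise. -/
noncomputable def bijMod {X Y : Type*} [NormedAddCommGroup X] [NormedSpace ℝ X]
    [NormedAddCommGroup Y] [NormedSpace ℝ Y] (F : X →L[ℝ] Y) : ℝ :=
  if h : ∃ e : X ≃L[ℝ] Y, (e : X →L[ℝ] Y) = F then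
    ‖(h.choose.symm : Y →L[ℝ] X)‖⁻¹
  else 0

set_option maxHeartbeats 1000000 in
theorem stmt_18
    {X Y : Type*} [NormedAddCommGroup X] [NormedSpace ℝ X] [CompleteSpace X]
    [NormedAddCommGroup Y] [NormedSpace ℝ Y] [CompleteSpace Y]
    (U : Set X) (hU : IsOpen U) (f : X → Y) (f' : X → (X →L[ℝ] Y))
    (hf : ∀ x ∈ U, HasFDerivAt f (f' x) x)
    (x₀ : X) (hx₀ : x₀ ∈ U) (R : ℝ) (hR : 0 < R)
    (hball : Metric.closedBall x₀ R ⊆ U)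
    (η K ν d : ℝ) (hη : 0 ≤ η) (hK : 0 < K) (hν : 0 < ν)
    (hd : 0 < d) (hdν : d ≤ ν / K)
    (hfx₀ : ‖f x₀‖ ≤ η) (hmod : ν ≤ bijMod (f' x₀))
    (hLip : ∀ x ∈ Metric.closedBall x₀ R, ∀ y ∈ Metric.closedBall x₀ R,
      ‖f' x - f' y‖ ≤ K * ‖x - y‖)
    (t : ℝ)
    (hroot : (η + ν * d) - (ν + K * d) * t + 3 * K / 2 * t ^ 2 = 0)
    (hsmallest : ∀ s : ℝ, (η + ν * d) - (ν + K * d) * s + 3 * K / 2 * s ^ 2 = 0 → t ≤ s)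
    (htR : t ≤ R)
    (hKt : K * t ≤ ν * (1 - 1 / Real.sqrt 3))
    (x rs : ℕ → X) (hx0 : x 0 = x₀) (hrs : ∀ k, ‖rs k‖ ≤ d)
    (hrec : ∀ k, ∀ ek : X ≃L[ℝ] Y, (ek : X →L[ℝ] Y) = f' (x k) →
      x (k + 1) = x k - ek.symm (f (x k)) + rs k) :
    ∀ k, ∀ ek : X ≃L[ℝ] Y, (ek : X →L[ℝ] Y) = f' (x k) →
      ∀ y ∈ U, ‖y - (x k - ek.symm (f (x k)))‖ ≤
        Real.sqrt 3 / ν * ‖f' (x k) (x k - y) - f (x k)‖ := by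
  -- basic numeric facts
  have hs3 : (1:ℝ) < Real.sqrt 3 := by
    rw [show (1:ℝ) = Real.sqrt 1 from Real.sqrt_one.symm]
    exact Real.sqrt_lt_sqrt (by norm_num) (by norm_num)
  have hs3pos : (0:ℝ) < Real.sqrt 3 := lt_trans one_pos hs3
  have htpos : 0 < t := by
    by_contra h
    push_neg at h
    nlinarith [mul_pos hν hd, mul_nonneg (mul_nonneg hK.le hd.le) (neg_nonneg.2 h),
      mul_nonneg hν.le (neg_nonneg.2 h), mul_nonneg hK.le (sq_nonneg t)]
  have hKtν : K * t < ν := by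
    have h1 : 0 < ν * (1 / Real.sqrt 3) := by positivity
    nlinarith
  have hνKt : ν / Real.sqrt 3 ≤ ν - K * t := by
    have h' : ν * (1 - 1 / Real.sqrt 3) = ν - ν / Real.sqrt 3 := by ring
    linarith [hKt, h'.symm.le]
  have hpos2 : 0 < ν - K * t := lt_of_lt_of_le (by positivity) hνKt
  -- unpack the bijectivity modulus hypothesis
  have hex0 : ∃ e : X ≃L[ℝ] Y, (e : X →L[ℝ] Y) = f' x₀ := by
    by_contra h
    unfold bijMod at hmod
    rw [dif_neg h] at hmod
    linarith
  obtain ⟨e₀, he₀⟩ := hex0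
  have hsymm0 : ‖(e₀.symm : Y →L[ℝ] X)‖ ≤ ν⁻¹ := by
    have hex0' : ∃ e : X ≃L[ℝ] Y, (e : X →L[ℝ] Y) = f' x₀ := ⟨e₀, he₀⟩
    unfold bijMod at hmod
    rw [dif_pos hex0'] at hmod
    have hcs : (hex0'.choose : X →L[ℝ] Y) = f' x₀ := hex0'.choose_spec
    have hsame : (e₀.symm : Y →L[ℝ] X) = (hex0'.choose.symm : Y →L[ℝ] X) := by
      ext y
      exact my_symm_unique _ _ (he₀.trans hcs.symm) y
    rw [hsame]
    have hpos : 0 < ‖(hex0'.choose.symm : Y →L[ℝ] X)‖ := by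
      by_contra hn
      push_neg at hn
      have h0 : ‖(hex0'.choose.symm : Y →L[ℝ] X)‖ = 0 := le_antisymm hn (norm_nonneg _)
      rw [h0] at hmod
      simp at hmod
      linarith
    have h1 : ‖(hex0'.choose.symm : Y →L[ℝ] X)‖ * ν ≤ 1 := by
      have := mul_le_mul_of_nonneg_left hmod hpos.le
      rwa [mul_inv_cancel₀ hpos.ne'] at this
    rw [← one_div, le_div_iff₀ hν]
    linarith
  have hlow0 : ∀ z, ν * ‖z‖ ≤ ‖f' x₀ z‖ := by
    intro z
    have := my_low_of_symm e₀ hν hsymm0 z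
    rwa [he₀] at this
  -- uniform statements for points in the ball of radius t
  have hconv : Convex ℝ (Metric.closedBall x₀ R) := convex_closedBall _ _
  have step : ∀ xx : X, ‖xx - x₀‖ ≤ t →
      (∃ e : X ≃L[ℝ] Y, (e : X →L[ℝ] Y) = f' xx) ∧
      ∀ e : X ≃L[ℝ] Y, (e : X →L[ℝ] Y) = f' xx →
        ‖(e.symm : Y →L[ℝ] X)‖ ≤ (ν - K * t)⁻¹ := by
    intro xx hxx
    have hxball : xx ∈ Metric.closedBall x₀ R := by
      rw [Metric.mem_closedBall, dist_eq_norm]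
      linarith
    have hclose : ‖f' xx - f' x₀‖ ≤ K * t := by
      have h1 := hLip xx hxball x₀ (Metric.mem_closedBall_self hR.le)
      have h2 : K * ‖xx - x₀‖ ≤ K * t := mul_le_mul_of_nonneg_left hxx hK.le
      linarith
    have hlow : ∀ z, (ν - K * t) * ‖z‖ ≤ ‖f' xx z‖ := by
      intro z
      have h1 := hlow0 z
      have h2 : ‖f' xx z - f' x₀ z‖ ≤ K * t * ‖z‖ := by
        have h3 : ‖(f' xx - f' x₀) z‖ ≤ ‖f' xx - f' x₀‖ * ‖z‖ :=
          ContinuousLinearMap.le_opNorm _ _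
        rw [ContinuousLinearMap.sub_apply] at h3
        exact h3.trans (mul_le_mul_of_nonneg_right hclose (norm_nonneg _))
      have h4 : ‖f' x₀ z‖ - ‖f' xx z‖ ≤ ‖f' x₀ z - f' xx z‖ := norm_sub_norm_le _ _
      rw [norm_sub_rev] at h2
      nlinarith [norm_nonneg z]
    constructor
    · exact my_exists_equiv e₀ hν hsymm0 (by rwa [he₀]) hKtν
    · intro e he
      apply my_symm_norm_le e hpos2
      intro z
      rw [he]
      exact hlow z
  -- the key induction: the sequence stays in the ball of radius t
  have key : ∀ k, ‖x k - x₀‖ ≤ t := by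
    intro k
    induction k with
    | zero => simp [hx0, htpos.le]
    | succ k ih =>
      obtain ⟨⟨ek, hek⟩, hbnd⟩ := step (x k) ih
      have hsymk := hbnd ek hek
      have hrec' := hrec k ek hek
      have hxkball : x k ∈ Metric.closedBall x₀ R := by
        rw [Metric.mem_closedBall, dist_eq_norm]
        linarith
      have htay : ‖f x₀ - f (x k) - f' (x k) (x₀ - x k)‖ ≤ K / 2 * ‖x₀ - x k‖ ^ 2 :=
        my_taylor hf hconv hball hK.le hLip hxkball (Metric.mem_closedBall_self hR.le)
      have hid : x (k + 1) - x₀ = ek.symm (f' (x k) (x k - x₀) - f (x k)) + rs k := by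
        rw [hrec']
        have h1 : ek.symm (f' (x k) (x k - x₀)) = x k - x₀ := by
          rw [← hek]
          exact ek.symm_apply_apply _
        rw [map_sub, h1]
        abel
      have hterm : ‖f' (x k) (x k - x₀) - f (x k)‖ ≤ η + K / 2 * ‖x k - x₀‖ ^ 2 := by
        have h1 : f' (x k) (x k - x₀) - f (x k) =
            (f x₀ - f (x k) - f' (x k) (x₀ - x k)) - f x₀ := by
          rw [map_sub, map_sub]
          abel
        rw [h1]
        calc ‖(f x₀ - f (x k) - f' (x k) (x₀ - x k)) - f x₀‖
            ≤ ‖f x₀ - f (x k) - f' (x k) (x₀ - x k)‖ + ‖f x₀‖ := norm_sub_le _ _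
          _ ≤ K / 2 * ‖x₀ - x k‖ ^ 2 + η := add_le_add htay hfx₀
          _ = η + K / 2 * ‖x k - x₀‖ ^ 2 := by rw [norm_sub_rev]; ring
      have hnorm1 : ‖ek.symm (f' (x k) (x k - x₀) - f (x k))‖ ≤
          (ν - K * t)⁻¹ * (η + K / 2 * ‖x k - x₀‖ ^ 2) := by
        calc ‖ek.symm (f' (x k) (x k - x₀) - f (x k))‖
            ≤ ‖(ek.symm : Y →L[ℝ] X)‖ * ‖f' (x k) (x k - x₀) - f (x k)‖ :=
              (ek.symm : Y →L[ℝ] X).le_opNorm _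
          _ ≤ (ν - K * t)⁻¹ * (η + K / 2 * ‖x k - x₀‖ ^ 2) :=
              mul_le_mul hsymk hterm (norm_nonneg _) (inv_nonneg.2 hpos2.le)
      have hmain : (ν - K * t)⁻¹ * (η + K / 2 * ‖x k - x₀‖ ^ 2) ≤ t - d := by
        rw [inv_mul_le_iff₀ hpos2]
        have hu2 : ‖x k - x₀‖ ^ 2 ≤ t ^ 2 := by
          have := norm_nonneg (x k - x₀)
          nlinarith
        have hkey : η + K / 2 * t ^ 2 = (t - d) * (ν - K * t) := by
          linear_combination hroot
        have h5 : K / 2 * ‖x k - x₀‖ ^ 2 ≤ K / 2 * t ^ 2 :=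
          mul_le_mul_of_nonneg_left hu2 (by positivity)
        linarith
      calc ‖x (k + 1) - x₀‖
          = ‖ek.symm (f' (x k) (x k - x₀) - f (x k)) + rs k‖ := by rw [hid]
        _ ≤ ‖ek.symm (f' (x k) (x k - x₀) - f (x k))‖ + ‖rs k‖ := norm_add_le _ _
        _ ≤ (t - d) + d := add_le_add (hnorm1.trans hmain) (hrs k)
        _ = t := by ring
  -- conclusion
  intro k ek hek y hy
  obtain ⟨-, hbnd⟩ := step (x k) (key k)
  have hsymk := hbnd ek hek
  have hsym3 : ‖(ek.symm : Y →L[ℝ] X)‖ ≤ Real.sqrt 3 / ν := by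
    have h1 : (ν - K * t)⁻¹ ≤ (ν / Real.sqrt 3)⁻¹ := by
      apply inv_anti₀ (by positivity) hνKt
    rw [inv_div] at h1
    exact hsymk.trans h1
  have hid2 : y - (x k - ek.symm (f (x k))) = ek.symm (f (x k) - f' (x k) (x k - y)) := by
    have h1 : ek.symm (f' (x k) (x k - y)) = x k - y := by
      rw [← hek]
      exact ek.symm_apply_apply _
    rw [map_sub, h1]
    abel
  rw [hid2]
  calc ‖ek.symm (f (x k) - f' (x k) (x k - y))‖
      ≤ ‖(ek.symm : Y →L[ℝ] X)‖ * ‖f (x k) - f' (x k) (x k - y)‖ :=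
        (ek.symm : Y →L[ℝ] X).le_opNorm _
    _ ≤ Real.sqrt 3 / ν * ‖f' (x k) (x k - y) - f (x k)‖ := by
        rw [norm_sub_rev]
        exact mul_le_mul_of_nonneg_right hsym3 (norm_nonneg _)
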